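/- If α < 0, then for every shift-invariant probability measure μ on Σ, ∫ V_u dμ ≥ 0 = ∫ V_u dμ_𝕂, where V_u = α(k−1) on (σ∘H)ᵏ(Σ) \ (σ∘H)^{k+1}(Σ). -/

import Mathlib

open Filter Topology MeasureTheory

/-- The left shift on the full 2-shift `Σ = {0,1}^ℕ`. -/
def shift (x : ℕ → Bool) : ℕ → Bool := fun n => x (n + 1)

/-- The Thue–Morse substitution `H : 0 → 01, 1 → 10`, acting on sequences. -/
def subH (x : ℕ → Bool) : ℕ → Bool :=
  fun n => if n % 2 = 0 then x (n / 2) else !x (n / 2)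

/-- The Thue–Morse sequence: `tm n` is the parity of the number of 1s in
the binary expansion of `n`. -/
def tm (n : ℕ) : Bool := (Nat.digits 2 n).count 1 % 2 == 1

/-- The fixed point of `subH` starting with 0. -/
def rho0 : ℕ → Bool := tm

/-- The fixed point of `subH` starting with 1. -/
def rho1 : ℕ → Bool := fun n => !tm n

/-- `rhoB b` is the fixed point of `subH` starting with digit `b`. -/
def rhoB : Bool → ℕ → Bool
  | false => rho0
  | true => rho1

/-- The digit-flipping involution. -/
def flipSeq (x : ℕ → Bool) : ℕ → Bool := fun n => !x n

/-- Prepend a digit to a sequence. -/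
def consTM (a : Bool) (x : ℕ → Bool) : ℕ → Bool
  | 0 => a
  | n + 1 => x n

/-- The Thue–Morse subshift: the closure of the shift orbit of `rho0`. -/
def TMK : Set (ℕ → Bool) := closure {y | ∃ n, y = shift^[n] rho0}

/-- The renormalization operator `𝓡V = V ∘ σ ∘ H + V ∘ H`. -/
def RenOp (V : (ℕ → Bool) → ℝ) : (ℕ → Bool) → ℝ :=
  fun x => V (shift (subH x)) + V (subH x)

/-- The Birkhoff sum `S_k V = ∑_{i<k} V ∘ σⁱ`. -/
def birkhoff (V : (ℕ → Bool) → ℝ) (k : ℕ) (x : ℕ → Bool) : ℝ :=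
  ∑ i ∈ Finset.range k, V (shift^[i] x)

/-- The potential `U_c`: value `c` on `[01]`, `-c` on `[10]`, `0` on `[00] ∪ [11]`. -/
def Upot (c : ℝ) (x : ℕ → Bool) : ℝ :=
  if x 0 = false ∧ x 1 = true then c
  else if x 0 = true ∧ x 1 = false then -c else 0

/-- The sliding block code `π(x)_k = 1` iff `x_k ≠ x_{k+1}`. -/
def piTM (x : ℕ → Bool) : ℕ → Bool := fun n => x n != x (n + 1)

/-- The Feigenbaum substitution `0 → 11, 1 → 10`, acting on sequences. -/
def subHfeig (x : ℕ → Bool) : ℕ → Bool :=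
  fun n => if n % 2 = 0 then true else !x (n / 2)

set_option linter.unusedSectionVars false
set_option maxHeartbeats 1000000

lemma tm_zero : tm 0 = false := by simp [tm]
lemma tm_one : tm 1 = true := by simp [tm]
lemma tm_two_mul (n : ℕ) : tm (2 * n) = tm n := by
  rcases Nat.eq_zero_or_pos n with h | h
  · simp [h]
  · unfold tm
    rw [Nat.digits_def' (by norm_num : 1 < 2) (by omega)]
    simp [Nat.mul_div_cancel_left, Nat.mul_mod_right]
lemma tm_two_mul_add_one (n : ℕ) : tm (2 * n + 1) = !tm n := by
  unfold tm
  rw [Nat.digits_def' (by norm_num : 1 < 2) (by omega)]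
  have h1 : (2 * n + 1) % 2 = 1 := by omega
  have h2 : (2 * n + 1) / 2 = n := by omega
  rw [h1, h2]
  simp [List.count_cons]
  rcases Nat.even_or_odd ((Nat.digits 2 n).count 1) with h | h <;>
    simp [Nat.even_iff, Nat.odd_iff] at h <;> simp [h] <;> omega

lemma tm_two_mul_add (a b : ℕ) (hb : b < 2) : tm (2 * a + b) = xor (tm a) (tm b) := by
  interval_cases b
  · simp [tm_zero, tm_two_mul]
  · rw [tm_two_mul_add_one, tm_one]; cases tm a <;> rfl

lemma subH_apply_tm (x : ℕ → Bool) (n : ℕ) : subH x n = xor (x (n / 2)) (tm (n % 2)) := by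
  unfold subH
  rcases Nat.even_or_odd n with h | h
  · simp [Nat.even_iff] at h; simp [h, tm_zero]
  · simp [Nat.odd_iff] at h; simp [h, tm_one]

lemma tm_mul_add {j : ℕ} : ∀ (u i : ℕ), i < 2 ^ j → tm (2 ^ j * u + i) = xor (tm (2 ^ j * u)) (tm i) := by
  induction j with
  | zero => intro u i hi; interval_cases i; simp [tm_zero]
  | succ j ih =>
    intro u i hi
    rcases Nat.even_or_odd i with h | h
    · obtain ⟨i', rfl⟩ := h
      have e1 : 2 ^ (j+1) * u + (i' + i') = 2 * (2 ^ j * u + i') := by ring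
      have e2 : 2 ^ (j+1) * u = 2 * (2 ^ j * u) := by ring
      have e3 : i' + i' = 2 * i' := by ring
      rw [e1, e2, e3, tm_two_mul, tm_two_mul, tm_two_mul, ih u i' (by omega)]
    · obtain ⟨i', rfl⟩ := h
      have e1 : 2 ^ (j+1) * u + (2 * i' + 1) = 2 * (2 ^ j * u + i') + 1 := by ring
      have e2 : 2 ^ (j+1) * u = 2 * (2 ^ j * u) := by ring
      rw [e1, e2, tm_two_mul_add_one, tm_two_mul, tm_two_mul_add_one, ih u i' (by omega)]
      cases tm (2 ^ j * u) <;> cases tm i' <;> rfl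

lemma tm_fixed (n : ℕ) : subH tm n = tm n := by
  rw [subH_apply_tm]
  rcases Nat.even_or_odd n with h | h
  · obtain ⟨m, rfl⟩ := h
    have : m + m = 2 * m := by ring
    rw [this]
    simp [Nat.mul_div_cancel_left, Nat.mul_mod_right, tm_zero, tm_two_mul]
  · obtain ⟨m, rfl⟩ := h
    have h1 : (2 * m + 1) / 2 = m := by omega
    have h2 : (2 * m + 1) % 2 = 1 := by omega
    rw [h1, h2, tm_one, tm_two_mul_add_one]
    cases tm m <;> rfl

lemma shift_iterate_apply (j : ℕ) (x : ℕ → Bool) (n : ℕ) : shift^[j] x n = x (n + j) := by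
  induction j generalizing x n with
  | zero => rfl
  | succ j ih =>
    rw [Function.iterate_succ_apply']
    show shift^[j] x (n+1) = x (n + (j+1))
    rw [ih]; congr 1; omega

lemma subH_shift (x : ℕ → Bool) : subH (shift x) = shift (shift (subH x)) := by
  funext n
  show subH (shift x) n = subH x (n + 2)
  unfold subH shift
  have h1 : (n+2) % 2 = n % 2 := by omega
  have h2 : (n+2) / 2 = n / 2 + 1 := by omega
  rw [h1, h2]

lemma subH_iterate_apply (k : ℕ) (z : ℕ → Bool) (n : ℕ) :
    subH^[k] z n = xor (z (n / 2 ^ k)) (tm (n % 2 ^ k)) := by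
  induction k generalizing n with
  | zero => simp [Nat.mod_one, tm_zero]
  | succ k ih =>
    rw [Function.iterate_succ_apply', subH_apply_tm, ih]
    have e1 : n / 2 / 2 ^ k = n / 2 ^ (k+1) := by
      rw [Nat.div_div_eq_div_mul]; ring_nf
    have e2 : n % 2 ^ (k+1) = 2 * (n / 2 % 2 ^ k) + n % 2 := by
      have hn : n = 2 ^ (k+1) * (n / 2 / 2 ^ k) + (2 * (n / 2 % 2 ^ k) + n % 2) := by
        have h1 : n = 2 * (n / 2) + n % 2 := by omega
        have h2 : n / 2 = 2 ^ k * (n / 2 / 2 ^ k) + n / 2 % 2 ^ k := by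
          rw [Nat.div_add_mod]
        calc n = 2 * (n / 2) + n % 2 := h1
        _ = 2 * (2 ^ k * (n / 2 / 2 ^ k) + n / 2 % 2 ^ k) + n % 2 := by rw [← h2]
        _ = 2 ^ (k+1) * (n / 2 / 2 ^ k) + (2 * (n / 2 % 2 ^ k) + n % 2) := by ring
      have hr : 2 * (n / 2 % 2 ^ k) + n % 2 < 2 ^ (k+1) := by
        have := Nat.mod_lt (n / 2) (show 0 < 2 ^ k by positivity)
        have h2 : n % 2 < 2 := Nat.mod_lt _ (by norm_num)
        have : n / 2 % 2 ^ k ≤ 2 ^ k - 1 := by omega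
        have hp : (0:ℕ) < 2 ^ k := by positivity
        calc 2 * (n / 2 % 2 ^ k) + n % 2 ≤ 2 * (2 ^ k - 1) + 1 := by omega
        _ < 2 ^ (k+1) := by rw [pow_succ]; omega
      conv_lhs => rw [hn]
      rw [Nat.mul_add_mod, Nat.mod_eq_of_lt hr]
    rw [e1, e2, tm_two_mul_add _ _ (by omega)]
    cases z (n / 2 ^ (k+1)) <;> cases tm (n / 2 % 2 ^ k) <;> cases tm (n % 2) <;> rfl

noncomputable section
open Classical

abbrev TT : (ℕ → Bool) → (ℕ → Bool) := shift ∘ subH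

lemma subH_iterate_shift (k : ℕ) (w : ℕ → Bool) :
    subH^[k] (shift w) = shift^[2 ^ k] (subH^[k] w) := by
  funext n
  rw [subH_iterate_apply, shift_iterate_apply, subH_iterate_apply]
  have h1 : (n + 2 ^ k) / 2 ^ k = n / 2 ^ k + 1 := by
    rw [Nat.add_div_right _ (by positivity)]
  have h2 : (n + 2 ^ k) % 2 ^ k = n % 2 ^ k := by
    rw [Nat.add_mod_right]
  rw [h1, h2]
  rfl

lemma TT_iterate (k : ℕ) (z : ℕ → Bool) :
    TT^[k] z = shift^[2 ^ k - 1] (subH^[k] z) := by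
  induction k generalizing z with
  | zero => simp
  | succ k ih =>
    rw [Function.iterate_succ_apply, ih]
    show shift^[2^k-1] (subH^[k] (shift (subH z))) = _
    rw [subH_iterate_shift]
    funext n
    rw [shift_iterate_apply, shift_iterate_apply, shift_iterate_apply]
    rw [Function.iterate_succ_apply]
    have hp : (0:ℕ) < 2 ^ k := by positivity
    have he : 2 ^ (k+1) = 2 * 2 ^ k := by ring
    have e : n + (2 ^ k - 1) + 2 ^ k = n + (2 ^ (k+1) - 1) := by omega
    rw [e]

lemma TT_iterate_apply (k : ℕ) (z : ℕ → Bool) (n : ℕ) :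
    TT^[k] z n = xor (z ((n + 2 ^ k - 1) / 2 ^ k)) (tm ((n + 2 ^ k - 1) % 2 ^ k)) := by
  rw [TT_iterate, shift_iterate_apply]
  have hp : (0:ℕ) < 2 ^ k := by positivity
  have e : n + (2 ^ k - 1) = n + 2 ^ k - 1 := by omega
  rw [e, subH_iterate_apply]

def blockTM (k p : ℕ) (x : ℕ → Bool) : Prop := ∀ i < 2 ^ k, x (p + i) = xor (x p) (tm i)
def alignedFrom (k s : ℕ) (x : ℕ → Bool) : Prop := ∀ m : ℕ, blockTM k (s + 2 ^ k * m) x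
def isAligned (k r : ℕ) (x : ℕ → Bool) : Prop := ∃ s, s % 2 ^ k = r ∧ alignedFrom k s x

lemma mem_range_aligned {k : ℕ} {x : ℕ → Bool} (hx : x ∈ Set.range (TT^[k])) :
    alignedFrom k 1 x := by
  obtain ⟨z, rfl⟩ := hx
  intro m i hi
  have hp : (0:ℕ) < 2 ^ k := by positivity
  rw [TT_iterate_apply, TT_iterate_apply]
  have hmul : 2 ^ k * (m+1) = 2 ^ k * m + 2 ^ k := by ring
  have e1 : 1 + 2 ^ k * m + i + 2 ^ k - 1 = 2 ^ k * (m + 1) + i := by omega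
  have e2 : 1 + 2 ^ k * m + 2 ^ k - 1 = 2 ^ k * (m + 1) := by omega
  rw [e1, e2]
  rw [Nat.mul_add_div hp, Nat.mul_add_mod, Nat.mul_div_cancel_left _ hp, Nat.mul_mod_right]
  rw [Nat.div_eq_of_lt hi, Nat.mod_eq_of_lt hi, tm_zero]
  cases z (m + 1 + 0) <;> cases tm i <;> rfl

lemma blockTM_shift {k p j : ℕ} {x : ℕ → Bool} (h : blockTM k p (shift^[j] x)) :
    blockTM k (p + j) x := by
  intro i hi
  have h1 := h i hi
  rw [shift_iterate_apply, shift_iterate_apply] at h1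
  have e : p + i + j = p + j + i := by omega
  rwa [e] at h1

lemma alignedFrom_shift {k s j : ℕ} {x : ℕ → Bool} (h : alignedFrom k s (shift^[j] x)) :
    alignedFrom k (s + j) x := by
  intro m
  have := blockTM_shift (h m)
  have e : s + 2 ^ k * m + j = s + j + 2 ^ k * m := by omega
  rwa [e] at this

lemma blockTM_proj {j k p : ℕ} (hjk : j ≤ k) {x : ℕ → Bool} (h : blockTM k p x) :
    ∀ u < 2 ^ (k - j), blockTM j (p + 2 ^ j * u) x := by
  intro u hu i hi
  have hlt : 2 ^ j * u + i < 2 ^ k := by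
    have : 2 ^ j * u + i < 2 ^ j * (u + 1) := by
      have : (0:ℕ) < 2 ^ j := by positivity
      calc 2 ^ j * u + i < 2 ^ j * u + 2 ^ j := by omega
      _ = 2 ^ j * (u+1) := by ring
    calc 2 ^ j * u + i < 2 ^ j * (u+1) := this
    _ ≤ 2 ^ j * 2 ^ (k - j) := by
        apply Nat.mul_le_mul_left; omega
    _ = 2 ^ k := by rw [← pow_add]; congr 1; omega
  have h1 := h (2 ^ j * u + i) hlt
  have h2 := h (2 ^ j * u) (lt_of_le_of_lt (by omega) hlt)
  rw [tm_mul_add u i hi] at h1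
  have e : p + (2 ^ j * u + i) = p + 2 ^ j * u + i := by omega
  rw [e] at h1
  rw [h1, h2]
  cases x p <;> cases tm (2 ^ j * u) <;> cases tm i <;> rfl

lemma alignedFrom_mono {j k s : ℕ} (hjk : j ≤ k) {x : ℕ → Bool} (h : alignedFrom k s x) :
    alignedFrom j s x := by
  intro m
  have hdecomp : 2 ^ j * m = 2 ^ k * (m / 2 ^ (k - j)) + 2 ^ j * (m % 2 ^ (k - j)) := by
    have e : (2:ℕ) ^ k = 2 ^ j * 2 ^ (k - j) := by rw [← pow_add]; congr 1; omega
    rw [e]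
    have := Nat.div_add_mod m (2 ^ (k - j))
    calc 2 ^ j * m = 2 ^ j * (2 ^ (k-j) * (m / 2 ^ (k-j)) + m % 2 ^ (k-j)) := by rw [this]
    _ = 2 ^ j * 2 ^ (k-j) * (m / 2 ^ (k-j)) + 2 ^ j * (m % 2 ^ (k-j)) := by ring
  have hb := blockTM_proj hjk (h (m / 2 ^ (k - j))) (m % 2 ^ (k - j))
    (Nat.mod_lt _ (by positivity))
  have e : s + 2 ^ k * (m / 2 ^ (k - j)) + 2 ^ j * (m % 2 ^ (k - j)) = s + 2 ^ j * m := by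
    omega
  rwa [e] at hb

lemma isAligned_mono {j k r : ℕ} (hjk : j ≤ k) {x : ℕ → Bool} (h : isAligned k r x) :
    isAligned j (r % 2 ^ j) x := by
  obtain ⟨s, hs, ha⟩ := h
  exact ⟨s, by rw [← hs, Nat.mod_mod_of_dvd _ (pow_dvd_pow 2 hjk)], alignedFrom_mono hjk ha⟩

def Afin (k : ℕ) (x : ℕ → Bool) : Finset ℕ :=
  (Finset.range (2 ^ k)).filter (fun r => isAligned k r x)

def Nk (k : ℕ) (x : ℕ → Bool) : ℕ := (Afin k x).card

lemma mem_Afin {k r : ℕ} {x : ℕ → Bool} :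
    r ∈ Afin k x ↔ r < 2 ^ k ∧ isAligned k r x := by
  simp [Afin, Finset.mem_filter, Finset.mem_range]

lemma Nk_le (k : ℕ) (x : ℕ → Bool) : Nk k x ≤ 2 ^ k := by
  calc Nk k x ≤ (Finset.range (2 ^ k)).card := Finset.card_filter_le _ _
  _ = 2 ^ k := Finset.card_range _

lemma alignedFrom_add {k s t : ℕ} {x : ℕ → Bool} (h : alignedFrom k s x) :
    alignedFrom k (s + 2 ^ k * t) x := by
  intro m
  have e : s + 2 ^ k * t + 2 ^ k * m = s + 2 ^ k * (t + m) := by ring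
  rw [e]; exact h (t + m)

lemma Afin_empty_of_one_empty {k : ℕ} {x : ℕ → Bool} (h : Afin 1 x = ∅) :
    Afin (k + 1) x = ∅ := by
  by_contra hne
  obtain ⟨r, hr⟩ := Finset.nonempty_of_ne_empty hne
  rw [mem_Afin] at hr
  have h1 : isAligned 1 (r % 2 ^ 1) x := isAligned_mono (by omega) hr.2
  have : r % 2 ^ 1 ∈ Afin 1 x := mem_Afin.mpr ⟨Nat.mod_lt _ (by norm_num), h1⟩
  rw [h] at this
  exact absurd this (Finset.notMem_empty _)

lemma eventually_alternating {x : ℕ → Bool} (h0 : isAligned 1 0 x) (h1 : isAligned 1 1 x) :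
    ∃ M, ∀ n ≥ M, x (n + 1) = !x n := by
  obtain ⟨s0, hs0, ha0⟩ := h0
  obtain ⟨s1, hs1, ha1⟩ := h1
  refine ⟨s0 + s1, fun n hn => ?_⟩
  have key : ∀ s, alignedFrom 1 s x → ∀ m, x (s + 2 * m + 1) = !x (s + 2 * m) := by
    intro s ha m
    have hb := ha m
    have := hb 1 (by norm_num)
    rw [tm_one] at this
    have e : s + 2 ^ 1 * m = s + 2 * m := by norm_num
    rw [e] at this
    rw [this]
    cases x (s + 2 * m) <;> rfl
  rcases Nat.even_or_odd n with hpar | hpar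
  · -- n even, s0 even
    have hs0' : s0 % 2 = 0 := by simpa using hs0
    have : ∃ m, n = s0 + 2 * m := by
      rw [Nat.even_iff] at hpar
      refine ⟨(n - s0) / 2, by omega⟩
    obtain ⟨m, rfl⟩ := this
    exact key s0 ha0 m
  · have hs1' : s1 % 2 = 1 := by simpa using hs1
    have : ∃ m, n = s1 + 2 * m := by
      rw [Nat.odd_iff] at hpar
      refine ⟨(n - s1) / 2, by omega⟩
    obtain ⟨m, rfl⟩ := this
    exact key s1 ha1 m

lemma Afin_empty_of_both {k : ℕ} {x : ℕ → Bool}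
    (h0 : isAligned 1 0 x) (h1 : isAligned 1 1 x) : Afin (k + 2) x = ∅ := by
  obtain ⟨M, hM⟩ := eventually_alternating h0 h1
  by_contra hne
  obtain ⟨r, hr⟩ := Finset.nonempty_of_ne_empty hne
  rw [mem_Afin] at hr
  obtain ⟨s, hs, ha⟩ := hr.2
  have hb := ha M
  set p := s + 2 ^ (k + 2) * M with hp
  have hpM : p ≥ M := by
    have h1 : (0:ℕ) < 2 ^ (k+2) := by positivity
    have := Nat.le_mul_of_pos_left M h1
    omega
  have h2 : x (p + 2) = xor (x p) (tm 2) := hb 2 (by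
    have : (4:ℕ) ≤ 2 ^ (k+2) := by
      calc (4:ℕ) = 2 ^ 2 := by norm_num
      _ ≤ 2 ^ (k+2) := Nat.pow_le_pow_right (by norm_num) (by omega)
    omega)
  have htm2 : tm 2 = true := by
    have : (2:ℕ) = 2 * 1 := by norm_num
    rw [this, tm_two_mul, tm_one]
  rw [htm2] at h2
  have ha1 : x (p + 1) = !x p := hM p hpM
  have ha2 : x (p + 2) = !x (p + 1) := by
    have := hM (p+1) (by omega)
    simpa using this
  rw [ha1] at ha2
  rw [ha2] at h2
  cases x p <;> simp at h2

lemma Nk_renorm {k s1 : ℕ} {x : ℕ → Bool}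
    (hs1 : alignedFrom 1 s1 x)
    (hnot : ¬(isAligned 1 0 x ∧ isAligned 1 1 x)) :
    Nk (k + 2) x ≤ Nk (k + 1) (fun m => x (s1 + 2 * m)) := by
  classical
  set y : ℕ → Bool := fun m => x (s1 + 2 * m) with hy
  -- parity rigidity
  have hpar : ∀ s, alignedFrom 1 s x → s % 2 = s1 % 2 := by
    intro s hsx
    by_contra hne
    have hA : isAligned 1 (s % 2) x := ⟨s, by simpa using rfl, hsx⟩
    have hB : isAligned 1 (s1 % 2) x := ⟨s1, by simpa using rfl, hs1⟩
    have h2s : s % 2 < 2 := Nat.mod_lt _ (by norm_num)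
    have h2s1 : s1 % 2 < 2 := Nat.mod_lt _ (by norm_num)
    apply hnot
    interval_cases h : s % 2 <;> interval_cases h' : s1 % 2 <;> simp_all
  -- the injection
  set M := 2 ^ (k + 2) with hM
  have hM2 : M = 2 * 2 ^ (k+1) := by rw [hM]; ring
  set f : ℕ → ℕ := fun r =>
    if h : isAligned (k + 2) r x then
      ((Nat.find h + M * s1 - s1) / 2) % 2 ^ (k + 1) else 0 with hf
  -- main property of f
  have hprop : ∀ r, (h : isAligned (k+2) r x) →
      ∃ u, f r = u % 2 ^ (k+1) ∧ (s1 + 2 * u) % M = r ∧ alignedFrom (k+1) u y := by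
    intro r h
    obtain ⟨hmod, halign⟩ := Nat.find_spec h
    set s := Nat.find h with hsdef
    set s' := s + M * s1 with hs'
    have halign' : alignedFrom (k+2) s' x := alignedFrom_add halign
    have hs'mod : s' % M = r := by
      rw [hs', Nat.add_mul_mod_self_left, hmod]
    have hs'ge : s' ≥ s1 := by
      have h1 : (0:ℕ) < M := by rw [hM]; positivity
      have := Nat.le_mul_of_pos_left s1 h1
      omega
    have hs'par : s' % 2 = s1 % 2 := hpar s' (alignedFrom_mono (by omega) halign')
    set u := (s' - s1) / 2 with hu
    have hs'eq : s' = s1 + 2 * u := by omega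
    refine ⟨u, ?_, ?_, ?_⟩
    · rw [hf]; simp only [dif_pos h]; rfl
    · rw [← hs'eq, hs'mod]
    · -- alignedFrom (k+1) u y
      intro m i hi
      have hb := halign' m
      have h2i : 2 * i < 2 ^ (k+2) := by
        have : 2 ^ (k+2) = 2 * 2 ^ (k+1) := by ring
        omega
      have h1 := hb (2 * i) (by rw [← hM]; exact h2i)
      have e1 : s1 + 2 * (u + 2 ^ (k+1) * m + i) = s' + 2 ^ (k+2) * m + 2 * i := by
        rw [hs'eq]; ring
      have e2 : s1 + 2 * (u + 2 ^ (k+1) * m) = s' + 2 ^ (k+2) * m := by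
        rw [hs'eq]; ring
      show x (s1 + 2 * (u + 2 ^ (k+1) * m + i)) = xor (x (s1 + 2 * (u + 2 ^ (k+1) * m))) (tm i)
      rw [e1, e2]
      rw [← hM] at h1 ⊢
      rw [h1, tm_two_mul]
  have hmaps : ∀ r ∈ Afin (k+2) x, f r ∈ Afin (k+1) y := by
    intro r hr
    rw [mem_Afin] at hr
    obtain ⟨u, hfu, _, halu⟩ := hprop r hr.2
    rw [mem_Afin]
    exact ⟨by rw [hfu]; exact Nat.mod_lt _ (by positivity), ⟨u, hfu.symm, halu⟩⟩
  have hinj : Set.InjOn f (Afin (k+2) x) := by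
    intro r hr r' hr' hfeq
    rw [Finset.mem_coe, mem_Afin] at hr hr'
    obtain ⟨u, hfu, hcong, _⟩ := hprop r hr.2
    obtain ⟨u', hfu', hcong', _⟩ := hprop r' hr'.2
    have hu : u % 2 ^ (k+1) = u' % 2 ^ (k+1) := by rw [← hfu, ← hfu', hfeq]
    have h1 : (s1 + 2 * u) % M = (s1 + 2 * u') % M := by
      have e : ∀ v : ℕ, s1 + 2 * v = s1 + 2 * (v % 2 ^ (k+1)) + M * (v / 2 ^ (k+1)) := by
        intro v
        have := Nat.div_add_mod v (2 ^ (k+1))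
        rw [hM2]
        calc s1 + 2 * v = s1 + 2 * (2 ^ (k+1) * (v / 2 ^ (k+1)) + v % 2 ^ (k+1)) := by rw [this]
        _ = s1 + 2 * (v % 2 ^ (k+1)) + 2 * 2 ^ (k+1) * (v / 2 ^ (k+1)) := by ring
      rw [e u, e u', Nat.add_mul_mod_self_left, Nat.add_mul_mod_self_left, hu]
    rw [← hcong, ← hcong', h1]
  exact Finset.card_le_card_of_injOn f hmaps hinj

lemma key_sum (K : ℕ) : ∀ x : ℕ → Bool,
    ∑ k ∈ Finset.range K, ((Nk (k + 1) x : ℝ) / 2 ^ (k + 1)) ≤ 1 := by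
  induction K with
  | zero => intro x; simp
  | succ K ih =>
    intro x
    rw [Finset.sum_range_succ']
    by_cases hone : Afin 1 x = ∅
    · have hz : ∀ k, Nk (k + 1) x = 0 := by
        intro k
        rw [Nk, Afin_empty_of_one_empty hone, Finset.card_empty]
      simp only [hz]
      simp
    · by_cases hboth : isAligned 1 0 x ∧ isAligned 1 1 x
      · have hz : ∀ k, Nk (k + 2) x = 0 := by
          intro k
          rw [Nk, Afin_empty_of_both hboth.1 hboth.2, Finset.card_empty]
        have h1 : (Nk 1 x : ℝ) ≤ 2 := by
          have := Nk_le 1 x; norm_num at this ⊢; exact_mod_cast this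
        calc ∑ k ∈ Finset.range K, ((Nk (k + 1 + 1) x : ℝ) / 2 ^ (k + 1 + 1))
              + (Nk 1 x : ℝ) / 2 ^ 1
            = (Nk 1 x : ℝ) / 2 := by
              simp only [hz]
              norm_num
        _ ≤ 2 / 2 := by linarith
        _ = 1 := by norm_num
      · -- exactly one alignment phase
        obtain ⟨r, hr⟩ := Finset.nonempty_of_ne_empty hone
        rw [mem_Afin] at hr
        obtain ⟨s1, _, hs1⟩ := hr.2
        set y : ℕ → Bool := fun m => x (s1 + 2 * m) with hy
        have hle : ∀ k, Nk (k + 2) x ≤ Nk (k + 1) y := fun k => Nk_renorm hs1 hboth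
        have hN1 : (Nk 1 x : ℝ) ≤ 1 := by
          have hsub : Afin 1 x ⊆ Finset.range 2 := by
            intro a ha; rw [mem_Afin] at ha; rw [Finset.mem_range]; exact_mod_cast ha.1
          have hcard : Nk 1 x ≤ 2 := Nk_le 1 x
          rcases Nat.lt_or_ge (Nk 1 x) 2 with h | h
          · exact_mod_cast Nat.lt_succ_iff.mp h
          · exfalso
            have : Afin 1 x = Finset.range 2 := by
              apply Finset.eq_of_subset_of_card_le hsub
              rw [Finset.card_range]; exact h
            apply hboth
            constructor
            · have : (0:ℕ) ∈ Afin 1 x := by rw [this]; simp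
              exact (mem_Afin.mp this).2
            · have : (1:ℕ) ∈ Afin 1 x := by rw [this]; simp
              exact (mem_Afin.mp this).2
        have step : ∑ k ∈ Finset.range K, ((Nk (k + 1 + 1) x : ℝ) / 2 ^ (k + 1 + 1))
            ≤ (1:ℝ) / 2 := by
          have hbd : ∑ k ∈ Finset.range K, ((Nk (k + 1 + 1) x : ℝ) / 2 ^ (k + 1 + 1))
              ≤ ∑ k ∈ Finset.range K, ((Nk (k + 1) y : ℝ) / 2 ^ (k + 1 + 1)) := by
            apply Finset.sum_le_sum
            intro k _
            gcongr
            exact_mod_cast hle k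
          have e : ∀ k : ℕ, ((Nk (k + 1) y : ℝ) / 2 ^ (k + 1 + 1))
              = ((Nk (k + 1) y : ℝ) / 2 ^ (k + 1)) / 2 := by
            intro k; rw [pow_succ]; ring
          have h2 : ∑ k ∈ Finset.range K, ((Nk (k + 1) y : ℝ) / 2 ^ (k + 1 + 1))
              = (∑ k ∈ Finset.range K, ((Nk (k + 1) y : ℝ) / 2 ^ (k + 1))) / 2 := by
            rw [Finset.sum_div]
            exact Finset.sum_congr rfl (fun k _ => e k)
          have h3 := ih y
          rw [h2] at hbd
          linarith
        have : (Nk 1 x : ℝ) / 2 ^ 1 ≤ 1 / 2 := by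
          norm_num; linarith
        linarith

lemma continuous_shift : Continuous shift :=
  continuous_pi fun n => continuous_apply (n + 1)

lemma continuous_subH : Continuous subH := by
  apply continuous_pi
  intro n
  by_cases h : n % 2 = 0
  · simp only [subH, h, if_true]
    exact continuous_apply (n / 2)
  · simp only [subH, h, if_false]
    exact Continuous.comp (continuous_of_discreteTopology (f := Bool.not)) (continuous_apply (n / 2))

lemma continuous_TT_iter (k : ℕ) : Continuous (TT^[k]) :=
  (continuous_shift.comp continuous_subH).iterate k

lemma measurableSet_B (k : ℕ) : MeasurableSet (Set.range (TT^[k])) :=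
  ((isCompact_range (continuous_TT_iter k)).isClosed).measurableSet

lemma measurable_shift : Measurable shift := continuous_shift.measurable

lemma count_le_Nk (k : ℕ) (x : ℕ → Bool) :
    ((Finset.range (2 ^ k)).filter (fun j => shift^[j] x ∈ Set.range (TT^[k]))).card
      ≤ Nk k x := by
  apply Finset.card_le_card_of_injOn (fun j => (1 + j) % 2 ^ k)
  · intro j hj
    rw [Finset.mem_coe, Finset.mem_filter, Finset.mem_range] at hj
    have h1 : alignedFrom k 1 (shift^[j] x) := mem_range_aligned hj.2
    have h2 : alignedFrom k (1 + j) x := alignedFrom_shift h1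
    exact mem_Afin.mpr ⟨Nat.mod_lt _ (by positivity), ⟨1 + j, rfl, h2⟩⟩
  · intro j hj j' hj' heq
    rw [Finset.mem_coe, Finset.mem_filter, Finset.mem_range] at hj hj'
    have hmod : ∀ i : ℕ, i < 2 ^ k → (1 + i) % 2 ^ k = if 1 + i = 2 ^ k then 0 else 1 + i := by
      intro i hi
      by_cases h : 1 + i = 2 ^ k
      · rw [h, if_pos rfl, Nat.mod_self]
      · rw [if_neg h, Nat.mod_eq_of_lt (by omega)]
    have heq' : (1 + j) % 2 ^ k = (1 + j') % 2 ^ k := heq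
    rw [hmod j hj.1, hmod j' hj'.1] at heq'
    by_cases h : 1 + j = 2 ^ k <;> by_cases h' : 1 + j' = 2 ^ k <;>
      simp [h, h'] at heq' <;> omega

-- the measure bound
lemma sum_measure_le {mu : Measure (ℕ → Bool)} [IsProbabilityMeasure mu]
    (hinv : MeasurePreserving shift mu mu) (K : ℕ) :
    ∑ k ∈ Finset.range K, (mu (Set.range (TT^[k + 1]))).toReal ≤ 1 := by
  classical
  set B : ℕ → Set (ℕ → Bool) := fun k => Set.range (TT^[k]) with hB
  set f : (ℕ → Bool) → ℝ := fun x =>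
    ∑ k ∈ Finset.range K, ((2:ℝ) ^ (k+1))⁻¹ *
      ∑ j ∈ Finset.range (2 ^ (k+1)), ((shift^[j]) ⁻¹' (B (k+1))).indicator (fun _ => (1:ℝ)) x
    with hf
  have hmeas : ∀ k j : ℕ, MeasurableSet ((shift^[j]) ⁻¹' (B k)) := fun k j =>
    (measurableSet_B k).preimage (measurable_shift.iterate j)
  have hint : Integrable f mu := by
    apply integrable_finset_sum _
    intro k _
    apply Integrable.const_mul
    apply integrable_finset_sum _
    intro j _
    exact (integrable_const (1:ℝ)).indicator (hmeas (k+1) j)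
  have hpt : ∀ x, f x ≤ 1 := by
    intro x
    have hcount : ∀ k j : ℕ, ((shift^[j]) ⁻¹' (B (k+1))).indicator (fun _ => (1:ℝ)) x
        = if shift^[j] x ∈ B (k+1) then (1:ℝ) else 0 := by
      intro k j
      by_cases h : shift^[j] x ∈ B (k+1) <;> simp [Set.indicator, h]
    have : f x = ∑ k ∈ Finset.range K, ((2:ℝ) ^ (k+1))⁻¹ *
        (((Finset.range (2 ^ (k+1))).filter (fun j => shift^[j] x ∈ B (k+1))).card : ℝ) := by
      rw [hf]
      apply Finset.sum_congr rfl
      intro k _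
      congr 1
      rw [Finset.sum_congr rfl (fun j _ => hcount k j)]
      rw [Finset.sum_boole]
    rw [this]
    calc ∑ k ∈ Finset.range K, ((2:ℝ) ^ (k+1))⁻¹ *
        (((Finset.range (2 ^ (k+1))).filter (fun j => shift^[j] x ∈ B (k+1))).card : ℝ)
        ≤ ∑ k ∈ Finset.range K, ((Nk (k+1) x : ℝ) / 2 ^ (k+1)) := by
          apply Finset.sum_le_sum
          intro k _
          rw [div_eq_inv_mul]
          apply mul_le_mul_of_nonneg_left ?_ (by positivity)
          exact_mod_cast count_le_Nk (k+1) x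
    _ ≤ 1 := key_sum K x
  have hint_eq : ∫ x, f x ∂mu = ∑ k ∈ Finset.range K, (mu (B (k+1))).toReal := by
    rw [hf, integral_finset_sum _ (fun k _ => by
      apply Integrable.const_mul
      apply integrable_finset_sum _
      intro j _
      exact (integrable_const (1:ℝ)).indicator (hmeas (k+1) j))]
    apply Finset.sum_congr rfl
    intro k _
    rw [integral_const_mul _ _, integral_finset_sum _ (fun j _ =>
      (integrable_const (1:ℝ)).indicator (hmeas (k+1) j))]
    have : ∀ j ∈ Finset.range (2 ^ (k+1)),
        ∫ x, ((shift^[j]) ⁻¹' (B (k+1))).indicator (fun _ => (1:ℝ)) x ∂mu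
          = (mu (B (k+1))).toReal := by
      intro j _
      rw [integral_indicator_const _ (hmeas (k+1) j)]
      rw [measureReal_def, (hinv.iterate j).measure_preimage (measurableSet_B (k+1)).nullMeasurableSet]
      rw [smul_eq_mul, mul_one]
    rw [Finset.sum_congr rfl this, Finset.sum_const, Finset.card_range]
    rw [nsmul_eq_mul]
    push_cast
    rw [← mul_assoc, inv_mul_cancel₀ (by positivity : ((2:ℝ)^(k+1)) ≠ 0), one_mul]
  have : ∫ x, f x ∂mu ≤ ∫ _x, (1:ℝ) ∂mu := integral_mono hint (integrable_const 1) hpt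
  rw [hint_eq] at this
  simpa [hB] using this

lemma subH_rho0 : subH rho0 = rho0 := funext tm_fixed

lemma subH_shift_iter (n : ℕ) (x : ℕ → Bool) :
    subH (shift^[n] x) = shift^[2 * n] (subH x) := by
  induction n generalizing x with
  | zero => rfl
  | succ n ih =>
    rw [Function.iterate_succ_apply, ih, subH_shift]
    have e : 2 * (n + 1) = 2 * n + 1 + 1 := by ring
    rw [e]
    rfl

lemma TMK_closed : IsClosed TMK := isClosed_closure

lemma subH_mem_TMK {x : ℕ → Bool} (hx : x ∈ TMK) : subH x ∈ TMK := by
  have h1 : subH x ∈ subH '' (closure {y | ∃ n, y = shift^[n] rho0}) := ⟨x, hx, rfl⟩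
  have h2 := image_closure_subset_closure_image continuous_subH (s := {y | ∃ n, y = shift^[n] rho0})
  have h3 := h2 h1
  apply closure_mono ?_ h3
  rintro z ⟨y, ⟨n, rfl⟩, rfl⟩
  exact ⟨2 * n, by rw [subH_shift_iter, subH_rho0]⟩

lemma TT_mem_TMK {x : ℕ → Bool} (hx : x ∈ TMK) : TT x ∈ TMK := by
  have h1 : TT x ∈ TT '' (closure {y | ∃ n, y = shift^[n] rho0}) := ⟨x, hx, rfl⟩
  have h2 := image_closure_subset_closure_image (continuous_shift.comp continuous_subH)
    (s := {y | ∃ n, y = shift^[n] rho0})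
  have h3 := h2 h1
  apply closure_mono ?_ h3
  rintro z ⟨y, ⟨n, rfl⟩, rfl⟩
  refine ⟨2 * n + 1, ?_⟩
  show shift (subH (shift^[n] rho0)) = _
  rw [subH_shift_iter, subH_rho0, Function.iterate_succ_apply']

lemma muK_B_lower (muK : Measure (ℕ → Bool)) [IsProbabilityMeasure muK]
    (hinvK : MeasurePreserving shift muK muK) (hKK : muK TMK = 1)
    (huniq : ∀ nu : Measure (ℕ → Bool), IsProbabilityMeasure nu →
      MeasurePreserving shift nu nu → nu TMK = 1 → nu = muK) :
    ∀ k : ℕ, ((2:ENNReal)⁻¹) ^ k ≤ muK (Set.range (TT^[k])) := by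
  have hmsubH : Measurable subH := continuous_subH.measurable
  have hmshift : Measurable shift := continuous_shift.measurable
  have hmTT : Measurable TT := hmshift.comp hmsubH
  set nu : Measure (ℕ → Bool) :=
    (2:ENNReal)⁻¹ • (muK.map subH) + (2:ENNReal)⁻¹ • (muK.map TT) with hnu
  have hnu_univ : nu Set.univ = 1 := by
    rw [hnu]
    simp only [Measure.add_apply, Measure.smul_apply, smul_eq_mul]
    rw [Measure.map_apply hmsubH MeasurableSet.univ,
      Measure.map_apply hmTT MeasurableSet.univ]
    simp only [Set.preimage_univ, measure_univ]
    rw [mul_one]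
    rw [← two_mul, ENNReal.mul_inv_cancel (by norm_num) (by norm_num)]
  have hnuprob : IsProbabilityMeasure nu := ⟨hnu_univ⟩
  have hnupres : MeasurePreserving shift nu nu := by
    constructor
    · exact hmshift
    · rw [hnu, Measure.map_add _ _ hmshift, Measure.map_smul, Measure.map_smul,
        Measure.map_map hmshift hmsubH, Measure.map_map hmshift hmTT]
      have e1 : shift ∘ subH = TT := rfl
      have e2 : Measure.map (shift ∘ TT) muK = Measure.map subH muK := by
        have e : shift ∘ TT = subH ∘ shift := by
          funext x
          exact (subH_shift x).symm
        rw [e, ← Measure.map_map hmsubH hmshift, hinvK.map_eq]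
      rw [e1, e2, add_comm]
  have hnuTMK : nu TMK = 1 := by
    have hTMKmeas : MeasurableSet TMK := TMK_closed.measurableSet
    have h1 : muK (subH ⁻¹' TMK) = 1 := by
      have hsub : TMK ⊆ subH ⁻¹' TMK := fun x hx => subH_mem_TMK hx
      have := measure_mono (μ := muK) hsub
      rw [hKK] at this
      refine le_antisymm ?_ this
      calc _ ≤ muK Set.univ := measure_mono (Set.subset_univ _)
      _ = 1 := measure_univ
    have h2 : muK (TT ⁻¹' TMK) = 1 := by
      have hsub : TMK ⊆ TT ⁻¹' TMK := fun x hx => TT_mem_TMK hx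
      have := measure_mono (μ := muK) hsub
      rw [hKK] at this
      refine le_antisymm ?_ this
      calc _ ≤ muK Set.univ := measure_mono (Set.subset_univ _)
      _ = 1 := measure_univ
    rw [hnu]
    simp only [Measure.add_apply, Measure.smul_apply, smul_eq_mul]
    rw [Measure.map_apply hmsubH hTMKmeas, Measure.map_apply hmTT hTMKmeas, h1, h2]
    rw [mul_one]
    rw [← two_mul, ENNReal.mul_inv_cancel (by norm_num) (by norm_num)]
  have hnueq : nu = muK := huniq nu hnuprob hnupres hnuTMK
  -- main induction
  intro k
  induction k with
  | zero => simp
  | succ k ih =>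
    have hstep : (2:ENNReal)⁻¹ * muK (Set.range (TT^[k])) ≤ muK (Set.range (TT^[k+1])) := by
      conv_rhs => rw [← hnueq]
      rw [hnu]
      simp only [Measure.add_apply, Measure.smul_apply, smul_eq_mul]
      have h2 : muK (Set.range (TT^[k])) ≤ muK (TT ⁻¹' (Set.range (TT^[k+1]))) := by
        apply measure_mono
        rintro x ⟨z, rfl⟩
        exact ⟨z, Function.iterate_succ_apply' TT k z⟩
      rw [Measure.map_apply hmTT (measurableSet_B (k+1))]
      calc (2:ENNReal)⁻¹ * muK (Set.range (TT^[k]))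
          ≤ (2:ENNReal)⁻¹ * muK (TT ⁻¹' (Set.range (TT^[k+1]))) := by
            exact mul_le_mul_right h2 _
      _ ≤ _ := le_add_self
    calc ((2:ENNReal)⁻¹) ^ (k+1) = (2:ENNReal)⁻¹ * ((2:ENNReal)⁻¹) ^ k := by ring
    _ ≤ (2:ENNReal)⁻¹ * muK (Set.range (TT^[k])) := mul_le_mul_right ih _
    _ ≤ _ := hstep

section
variable (mu : Measure (ℕ → Bool)) [IsProbabilityMeasure mu]

def Bset (k : ℕ) : Set (ℕ → Bool) := Set.range (TT^[k])
def Aset (k : ℕ) : Set (ℕ → Bool) := Bset k \ Bset (k + 1)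

lemma Bset_zero : Bset 0 = Set.univ := by
  simp [Bset]
lemma Bset_succ_subset (k : ℕ) : Bset (k + 1) ⊆ Bset k := by
  rintro x ⟨z, rfl⟩
  exact ⟨TT z, (Function.iterate_succ_apply TT k z).symm⟩
lemma Bset_mono {k j : ℕ} (h : k ≤ j) : Bset j ⊆ Bset k := by
  induction j with
  | zero => have : k = 0 := by omega
            subst this; exact le_refl _
  | succ j ih =>
    rcases Nat.lt_or_ge k (j+1) with h' | h'
    · exact (Bset_succ_subset j).trans (ih (by omega))
    · have : k = j + 1 := by omega
      subst this; exact le_refl _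
lemma Aset_meas (k : ℕ) : MeasurableSet (Aset k) :=
  (measurableSet_B k).diff (measurableSet_B (k+1))
lemma Aset_disj : Pairwise (Function.onFun Disjoint Aset) := by
  have key : ∀ {k l}, k < l → Disjoint (Aset k) (Aset l) := by
    intro k l h
    rw [Set.disjoint_left]
    rintro x ⟨_, hnot⟩ ⟨hin, _⟩
    exact hnot (Bset_mono (by omega) hin)
  intro k l h
  rcases Nat.lt_or_ge k l with h' | h'
  · exact key h'
  · exact (key (by omega)).symm

lemma measure_split (k : ℕ) : mu (Bset k) = mu (Bset (k+1)) + mu (Aset k) := by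
  have hU : Bset k = Bset (k+1) ∪ Aset k := by
    rw [Aset, Set.union_diff_cancel (Bset_succ_subset k)]
  rw [hU]
  refine measure_union ?_ (Aset_meas k)
  exact Set.disjoint_left.mpr (fun x hx hx2 => hx2.2 hx)

lemma bsplit (k : ℕ) :
    (mu (Bset k)).toReal = (mu (Bset (k+1))).toReal + (mu (Aset k)).toReal := by
  rw [measure_split mu k, ENNReal.toReal_add (measure_ne_top _ _) (measure_ne_top _ _)]

lemma b_zero : (mu (Bset 0)).toReal = 1 := by
  rw [Bset_zero]; simp

lemma b_le_inv (hinv : MeasurePreserving shift mu mu) (K : ℕ) (hK : 1 ≤ K) : (mu (Bset K)).toReal ≤ 1 / K := by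
  have hmono : ∀ k ∈ Finset.range K, (mu (Bset K)).toReal ≤ (mu (Bset (k+1))).toReal := by
    intro k hk
    rw [Finset.mem_range] at hk
    apply ENNReal.toReal_mono (measure_ne_top _ _)
    exact measure_mono (Bset_mono (by omega))
  have h1 : (K : ℝ) * (mu (Bset K)).toReal ≤ ∑ k ∈ Finset.range K, (mu (Bset (k+1))).toReal := by
    calc (K : ℝ) * (mu (Bset K)).toReal = ∑ _k ∈ Finset.range K, (mu (Bset K)).toReal := by
          rw [Finset.sum_const, Finset.card_range, nsmul_eq_mul]
    _ ≤ _ := Finset.sum_le_sum hmono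
  have h2 := sum_measure_le hinv K
  have hKpos : (0:ℝ) < K := by exact_mod_cast hK
  rw [le_div_iff₀ hKpos]
  calc (mu (Bset K)).toReal * K = K * (mu (Bset K)).toReal := by ring
  _ ≤ _ := le_trans h1 h2

lemma inter_null (hinv : MeasurePreserving shift mu mu) : mu (⋂ k, Bset k) = 0 := by
  have h1 : ∀ K : ℕ, 1 ≤ K → (mu (⋂ k, Bset k)).toReal ≤ 1 / K := by
    intro K hK
    refine le_trans ?_ (b_le_inv mu hinv K hK)
    apply ENNReal.toReal_mono (measure_ne_top _ _)
    exact measure_mono (Set.iInter_subset _ K)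
  have h0 : (mu (⋂ k, Bset k)).toReal = 0 := by
    have htend : Tendsto (fun K : ℕ => 1 / (K:ℝ)) atTop (𝓝 0) :=
      tendsto_one_div_atTop_nhds_zero_nat
    have hle : (mu (⋂ k, Bset k)).toReal ≤ 0 := by
      apply ge_of_tendsto htend
      filter_upwards [eventually_ge_atTop 1] with K hK
      exact h1 K hK
    exact le_antisymm hle ENNReal.toReal_nonneg
  rcases (ENNReal.toReal_eq_zero_iff _).mp h0 with h | h
  · exact h
  · exact absurd h (measure_ne_top _ _)

lemma union_eq : (⋃ k, Aset k) = (⋂ k, Bset k)ᶜ := by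
  ext x
  simp only [Set.mem_iUnion, Set.mem_compl_iff, Set.mem_iInter, not_forall]
  constructor
  · rintro ⟨k, _, hnot⟩
    exact ⟨k + 1, hnot⟩
  · rintro ⟨k, hk⟩
    have hx0 : x ∈ Bset 0 := by rw [Bset_zero]; trivial
    -- find least k with x ∉ Bset k
    have : ∃ j, x ∈ Bset j ∧ x ∉ Bset (j+1) := by
      by_contra hno
      push_neg at hno
      have : ∀ j, x ∈ Bset j := by
        intro j
        induction j with
        | zero => exact hx0
        | succ j ih => exact hno j ih
      exact hk (this k)
    obtain ⟨j, hj1, hj2⟩ := this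
    exact ⟨j, hj1, hj2⟩

lemma union_full (hinv : MeasurePreserving shift mu mu) : mu (⋃ k, Aset k) = 1 := by
  have hm : ∀ k, MeasurableSet (Bset k) := fun k => measurableSet_B k
  rw [union_eq, measure_compl (MeasurableSet.iInter hm)
    (measure_ne_top _ _), inter_null mu hinv]
  simp

end

section main
variable {mu : Measure (ℕ → Bool)} [IsProbabilityMeasure mu]
variable {alpha : ℝ} {Vu : (ℕ → Bool) → ℝ}

lemma decomp (hinv : MeasurePreserving shift mu mu) (hInt : Integrable Vu mu)
    (hVu : ∀ k : ℕ, ∀ x ∈ Set.range ((shift ∘ subH)^[k]) \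
      Set.range ((shift ∘ subH)^[k + 1]), Vu x = alpha * ((k : ℝ) - 1)) :
    HasSum (fun k : ℕ => alpha * ((k : ℝ) - 1) * (mu (Aset k)).toReal) (∫ x, Vu x ∂mu) := by
  have hm : ∀ k, MeasurableSet (Aset k) := Aset_meas
  have hsum := hasSum_integral_iUnion (μ := mu) (f := Vu) hm Aset_disj
    (hInt.integrableOn)
  have hterm : ∀ k, ∫ x in Aset k, Vu x ∂mu = alpha * ((k : ℝ) - 1) * (mu (Aset k)).toReal := by
    intro k
    rw [setIntegral_congr_fun (hm k) (fun x hx => hVu k x hx)]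
    rw [setIntegral_const, smul_eq_mul, measureReal_def]
    ring
  have htot : ∫ x in ⋃ k, Aset k, Vu x ∂mu = ∫ x, Vu x ∂mu := by
    have hU : MeasurableSet (⋃ k, Aset k) := MeasurableSet.iUnion hm
    have hcompl : mu (⋃ k, Aset k)ᶜ = 0 := by
      have h1 := union_full mu hinv
      have := measure_compl hU (measure_ne_top mu _)
      rw [this, h1]
      simp
    have h2 : ∫ x in (⋃ k, Aset k)ᶜ, Vu x ∂mu = 0 := by
      rw [Measure.restrict_eq_zero.mpr hcompl]
      exact integral_zero_measure _
    have h3 := integral_add_compl hU hInt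
    linarith
  rw [← htot]
  have : (fun k => ∫ x in Aset k, Vu x ∂mu)
      = (fun k : ℕ => alpha * ((k : ℝ) - 1) * (mu (Aset k)).toReal) := funext hterm
  rwa [this] at hsum

lemma partial_sum_a (N : ℕ) :
    ∑ k ∈ Finset.range N, (mu (Aset k)).toReal = 1 - (mu (Bset N)).toReal := by
  induction N with
  | zero => simp [b_zero mu]
  | succ N ih =>
    rw [Finset.sum_range_succ, ih, bsplit mu N]
    ring

lemma abel_id (N : ℕ) :
    ∑ k ∈ Finset.range N, (k : ℝ) * (mu (Aset k)).toReal + N * (mu (Bset N)).toReal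
      = ∑ k ∈ Finset.range N, (mu (Bset (k+1))).toReal := by
  induction N with
  | zero => simp
  | succ N ih =>
    rw [Finset.sum_range_succ, Finset.sum_range_succ, ← ih, bsplit mu N]
    push_cast
    ring

lemma partial_g_le (hinv : MeasurePreserving shift mu mu) (N : ℕ) (hN : 1 ≤ N) :
    ∑ k ∈ Finset.range N, ((k : ℝ) - 1) * (mu (Aset k)).toReal ≤ 0 := by
  have h1 : ∑ k ∈ Finset.range N, ((k : ℝ) - 1) * (mu (Aset k)).toReal
      = ∑ k ∈ Finset.range N, (k : ℝ) * (mu (Aset k)).toReal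
        - ∑ k ∈ Finset.range N, (mu (Aset k)).toReal := by
    rw [← Finset.sum_sub_distrib]
    apply Finset.sum_congr rfl
    intro k _; ring
  have h2 := abel_id (mu := mu) N
  have h3 := partial_sum_a (mu := mu) N
  have h4 : ∑ k ∈ Finset.range N, (mu (Bset (k+1))).toReal ≤ 1 := sum_measure_le hinv N
  have h5 : (0:ℝ) ≤ (mu (Bset N)).toReal := ENNReal.toReal_nonneg
  have h6 : (1:ℝ) ≤ N := by exact_mod_cast hN
  have h7 : (N:ℝ) * (mu (Bset N)).toReal ≥ 1 * (mu (Bset N)).toReal := by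
    apply mul_le_mul_of_nonneg_right h6 h5
  linarith

lemma hasSum_g (hinv : MeasurePreserving shift mu mu) (hInt : Integrable Vu mu)
    (halpha : alpha < 0)
    (hVu : ∀ k : ℕ, ∀ x ∈ Set.range ((shift ∘ subH)^[k]) \
      Set.range ((shift ∘ subH)^[k + 1]), Vu x = alpha * ((k : ℝ) - 1)) :
    HasSum (fun k : ℕ => ((k : ℝ) - 1) * (mu (Aset k)).toReal) (alpha⁻¹ * ∫ x, Vu x ∂mu) := by
  have h := (decomp hinv hInt hVu).mul_left alpha⁻¹
  have he : (fun k : ℕ => alpha⁻¹ * (alpha * ((k : ℝ) - 1) * (mu (Aset k)).toReal))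
      = (fun k : ℕ => ((k : ℝ) - 1) * (mu (Aset k)).toReal) := by
    funext k
    rw [← mul_assoc, ← mul_assoc, inv_mul_cancel₀ (ne_of_lt halpha), one_mul]
  rwa [he] at h

lemma int_nonneg (hinv : MeasurePreserving shift mu mu) (hInt : Integrable Vu mu)
    (halpha : alpha < 0)
    (hVu : ∀ k : ℕ, ∀ x ∈ Set.range ((shift ∘ subH)^[k]) \
      Set.range ((shift ∘ subH)^[k + 1]), Vu x = alpha * ((k : ℝ) - 1)) :
    0 ≤ ∫ x, Vu x ∂mu := by
  have hg := hasSum_g hinv hInt halpha hVu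
  set g : ℕ → ℝ := fun k : ℕ => ((k : ℝ) - 1) * (mu (Aset k)).toReal with hgdef
  have hS : alpha⁻¹ * ∫ x, Vu x ∂mu ≤ 0 := by
    apply le_of_tendsto hg
    filter_upwards [eventually_ge_atTop ({0} : Finset ℕ)] with u hu
    have h0u : (0:ℕ) ∈ u := hu (Finset.mem_singleton_self 0)
    set N := u.sup id + 1 with hN
    have hsub : u ⊆ Finset.range N := by
      intro i hi
      rw [Finset.mem_range, hN]
      have := Finset.le_sup (f := id) hi
      simp only [id] at this
      omega
    have hmono : ∑ k ∈ u, g k ≤ ∑ k ∈ Finset.range N, g k := by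
      apply Finset.sum_le_sum_of_subset_of_nonneg hsub
      intro i hi hnotu
      have hi0 : i ≠ 0 := fun h => hnotu (h ▸ h0u)
      have : (1:ℝ) ≤ (i:ℝ) := by
        have : 1 ≤ i := Nat.one_le_iff_ne_zero.mpr hi0
        exact_mod_cast this
      have hta : (0:ℝ) ≤ (mu (Aset i)).toReal := ENNReal.toReal_nonneg
      show 0 ≤ ((i : ℝ) - 1) * (mu (Aset i)).toReal
      exact mul_nonneg (by linarith) hta
    refine hmono.trans (partial_g_le hinv N (by omega))
  -- conclude
  by_contra hneg
  push_neg at hneg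
  have h1 : 0 < alpha⁻¹ * ∫ x, Vu x ∂mu := by
    apply mul_pos_of_neg_of_neg _ hneg
    exact inv_neg''.mpr halpha
  linarith

end main


section muKmain
variable {muK : Measure (ℕ → Bool)} [IsProbabilityMeasure muK]
variable {alpha : ℝ} {Vu : (ℕ → Bool) → ℝ}

lemma geom_partial (K : ℕ) : ∑ j ∈ Finset.range K, ((1:ℝ)/2)^(j+1) = 1 - (1/2)^K := by
  induction K with
  | zero => simp
  | succ K ih =>
    rw [Finset.sum_range_succ, ih, pow_succ]
    ring

lemma muK_b_eq (hinvK : MeasurePreserving shift muK muK) (hKK : muK TMK = 1)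
    (huniq : ∀ nu : Measure (ℕ → Bool), IsProbabilityMeasure nu →
      MeasurePreserving shift nu nu → nu TMK = 1 → nu = muK) :
    ∀ k, (muK (Bset k)).toReal = ((1:ℝ)/2)^k := by
  have hlow : ∀ k, ((1:ℝ)/2)^k ≤ (muK (Bset k)).toReal := by
    intro k
    have h := muK_B_lower muK hinvK hKK huniq k
    have := ENNReal.toReal_mono (measure_ne_top muK _) h
    calc ((1:ℝ)/2)^k = (((2:ENNReal)⁻¹ ^ k)).toReal := by
          rw [ENNReal.toReal_pow, ENNReal.toReal_inv]
          norm_num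
    _ ≤ _ := this
  have hup : ∀ k, (muK (Bset (k+1))).toReal ≤ ((1:ℝ)/2)^(k+1) := by
    intro k
    have key : ∀ K, k < K → (muK (Bset (k+1))).toReal - ((1:ℝ)/2)^(k+1) ≤ (1/2)^K := by
      intro K hkK
      have hterm : ∀ j ∈ Finset.range K,
          (0:ℝ) ≤ (muK (Bset (j+1))).toReal - ((1:ℝ)/2)^(j+1) := by
        intro j _
        have := hlow (j+1)
        linarith
      have hsingle : (muK (Bset (k+1))).toReal - ((1:ℝ)/2)^(k+1)
          ≤ ∑ j ∈ Finset.range K, ((muK (Bset (j+1))).toReal - ((1:ℝ)/2)^(j+1)) :=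
        Finset.single_le_sum hterm (Finset.mem_range.mpr hkK)
      have hsum : ∑ j ∈ Finset.range K, ((muK (Bset (j+1))).toReal - ((1:ℝ)/2)^(j+1))
          = (∑ j ∈ Finset.range K, (muK (Bset (j+1))).toReal) - (1 - (1/2)^K) := by
        rw [Finset.sum_sub_distrib, geom_partial]
      have hle : ∑ j ∈ Finset.range K, (muK (Bset (j+1))).toReal ≤ 1 :=
        sum_measure_le hinvK K
      rw [hsum] at hsingle
      linarith
    have htend : Tendsto (fun K : ℕ => ((1:ℝ)/2)^K) atTop (𝓝 0) := by
      apply tendsto_pow_atTop_nhds_zero_of_lt_one (by norm_num) (by norm_num)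
    have : (muK (Bset (k+1))).toReal - ((1:ℝ)/2)^(k+1) ≤ 0 := by
      apply ge_of_tendsto htend
      filter_upwards [eventually_gt_atTop k] with K hK
      exact key K hK
    linarith
  intro k
  cases k with
  | zero => rw [b_zero muK]; norm_num
  | succ k => exact le_antisymm (hup k) (hlow (k+1))

lemma muK_a_eq (hinvK : MeasurePreserving shift muK muK) (hKK : muK TMK = 1)
    (huniq : ∀ nu : Measure (ℕ → Bool), IsProbabilityMeasure nu →
      MeasurePreserving shift nu nu → nu TMK = 1 → nu = muK) :
    ∀ k, (muK (Aset k)).toReal = ((1:ℝ)/2)^(k+1) := by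
  intro k
  have h1 := bsplit muK k
  have h2 := muK_b_eq hinvK hKK huniq k
  have h3 := muK_b_eq hinvK hKK huniq (k+1)
  rw [h2, h3] at h1
  rw [pow_succ] at h1 ⊢
  linarith

lemma int_muK_eq (hinvK : MeasurePreserving shift muK muK) (hKK : muK TMK = 1)
    (huniq : ∀ nu : Measure (ℕ → Bool), IsProbabilityMeasure nu →
      MeasurePreserving shift nu nu → nu TMK = 1 → nu = muK)
    (hIntK : Integrable Vu muK) (halpha : alpha < 0)
    (hVu : ∀ k : ℕ, ∀ x ∈ Set.range ((shift ∘ subH)^[k]) \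
      Set.range ((shift ∘ subH)^[k + 1]), Vu x = alpha * ((k : ℝ) - 1)) :
    ∫ x, Vu x ∂muK = 0 := by
  have hd := decomp hinvK hIntK hVu
  have hrw : (fun k : ℕ => alpha * ((k : ℝ) - 1) * (muK (Aset k)).toReal)
      = (fun k : ℕ => alpha * ((k : ℝ) - 1) * ((1:ℝ)/2)^(k+1)) := by
    funext k
    rw [muK_a_eq hinvK hKK huniq k]
  rw [hrw] at hd
  have h1 : HasSum (fun n : ℕ => (n:ℝ) * ((1:ℝ)/2)^n) 2 := by
    have := hasSum_coe_mul_geometric_of_norm_lt_one (𝕜 := ℝ) (r := 1/2)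
      (by rw [Real.norm_eq_abs, abs_of_pos] <;> norm_num)
    rw [show (1:ℝ)/2/(1-1/2)^2 = 2 by norm_num] at this; exact this
  have h2 : HasSum (fun n : ℕ => ((1:ℝ)/2)^n) 2 := by
    have := hasSum_geometric_of_lt_one (r := (1:ℝ)/2) (by norm_num) (by norm_num)
    convert this using 2
    norm_num
  have h3 : HasSum (fun n : ℕ => alpha/2 * ((n:ℝ) * ((1:ℝ)/2)^n) - alpha/2 * ((1:ℝ)/2)^n) 0 := by
    have := (h1.mul_left (alpha/2)).sub (h2.mul_left (alpha/2))
    simpa using this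
  have hfun : (fun n : ℕ => alpha/2 * ((n:ℝ) * ((1:ℝ)/2)^n) - alpha/2 * ((1:ℝ)/2)^n)
      = (fun k : ℕ => alpha * ((k : ℝ) - 1) * ((1:ℝ)/2)^(k+1)) := by
    funext n
    rw [pow_succ]
    ring
  rw [hfun] at h3
  exact hd.unique h3

end muKmain

end
/-- if `α < 0`, then `∫ V_u dμ ≥ 0 = ∫ V_u dμ_𝕂` for every
shift-invariant probability measure `μ`. -/
theorem stmt17 (alpha : ℝ) (halpha : alpha < 0) (Vu : (ℕ → Bool) → ℝ)
    (hVu : ∀ k : ℕ, ∀ x ∈ Set.range ((shift ∘ subH)^[k]) \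
      Set.range ((shift ∘ subH)^[k + 1]), Vu x = alpha * ((k : ℝ) - 1))
    (muK : Measure (ℕ → Bool)) [IsProbabilityMeasure muK]
    (hinvK : MeasurePreserving shift muK muK) (hKK : muK TMK = 1)
    (huniq : ∀ nu : Measure (ℕ → Bool), IsProbabilityMeasure nu →
      MeasurePreserving shift nu nu → nu TMK = 1 → nu = muK)
    (hIntK : Integrable Vu muK)
    (mu : Measure (ℕ → Bool)) [IsProbabilityMeasure mu]
    (hinv : MeasurePreserving shift mu mu) (hInt : Integrable Vu mu) :
    (∫ x, Vu x ∂muK = 0) ∧ 0 ≤ ∫ x, Vu x ∂mu := by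

  refine ⟨int_muK_eq hinvK hKK huniq hIntK halpha hVu, int_nonneg hinv hInt halpha hVu⟩
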